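/- Let n and t be positive integers. Then in the polynomial ring ℤ[z]: 1 − Σ_{I=⌊(n+1)/2⌋}^{n} C(t, 2I−n)·z^I = −Σ_{I=⌊(n+1)/2⌋}^{n} ( Σ_{i=⌊(n+1)/2⌋}^{n−1} (−1)^{I−i}·C(t+2i−n−1, 2i−n)·C(t, I−i) )·z^I + Σ_{I=0}^{n} ( Σ_{i=0}^{n−1} (−1)^{I−i}·C(t+i−1, i)·C(t, I−i) )·z^I. -/

import Mathlib

open Polynomial

/-- The generalized binomial coefficient `C(a,b)` for integers `a`, `b`:
`C(a,b) = 0` if `b < 0`, and `C(a,b) = a(a-1)⋯(a-b+1)/b!` if `b ≥ 0`. -/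
noncomputable def binom (a b : ℤ) : ℤ := if b < 0 then 0 else Ring.choose a b.toNat

section Helpers


lemma binom_of_neg {a b : ℤ} (h : b < 0) : binom a b = 0 := if_pos h

lemma binom_natCast (t k : ℕ) : binom (t : ℤ) (k : ℤ) = (t.choose k : ℤ) := by
  rw [binom, if_neg (not_lt.2 (Int.natCast_nonneg k)), Int.toNat_natCast, Ring.choose_natCast]

lemma negOnePow_natCast' (k : ℕ) : ((Int.negOnePow (k : ℤ)) : ℤ) = (-1) ^ k := by
  simp [Int.negOnePow_def, zpow_natCast]

open PowerSeries Finset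

lemma coeff_one_sub_X_pow (t j : ℕ) :
    PowerSeries.coeff (R := ℤ) j ((1 - PowerSeries.X) ^ t) = (-1) ^ j * (t.choose j : ℤ) := by
  have h : ((1 : ℤ⟦X⟧) - PowerSeries.X) ^ t
      = ∑ k ∈ Finset.range (t + 1),
          PowerSeries.C (R := ℤ) ((-1) ^ k * (t.choose k : ℤ)) * PowerSeries.X ^ k := by
    rw [sub_eq_add_neg, add_comm, add_pow]
    refine Finset.sum_congr rfl fun k hk => ?_
    rw [neg_pow]
    simp only [map_mul, map_pow, map_neg, map_one, map_natCast]
    ring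
  rw [h, map_sum]
  simp only [PowerSeries.coeff_C_mul, PowerSeries.coeff_X_pow, mul_ite, mul_one, mul_zero]
  rw [Finset.sum_ite_eq (Finset.range (t + 1)) j]
  by_cases hj : j ∈ Finset.range (t + 1)
  · rw [if_pos hj]
  · rw [if_neg hj]
    rw [Nat.choose_eq_zero_of_lt (by simpa using hj)]
    simp

lemma one_sub_sq_pow (t : ℕ) :
    ((1 : ℤ⟦X⟧) - PowerSeries.X ^ 2) ^ t
      = ∑ k ∈ Finset.range (t + 1),
          PowerSeries.C (R := ℤ) ((-1) ^ k * (t.choose k : ℤ)) * PowerSeries.X ^ (2 * k) := by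
  rw [sub_eq_add_neg, add_comm, add_pow]
  refine Finset.sum_congr rfl fun k hk => ?_
  rw [neg_pow, pow_mul]
  simp only [map_mul, map_pow, map_neg, map_one, map_natCast]
  ring

-- Vandermonde-type identity 1 : coefficients of (1-X)^{-(d+1)} * (1-X)^{d+1} = 1
lemma V1 (d s : ℕ) :
    (∑ k ∈ Finset.range (s + 1),
        ((d + k).choose d : ℤ) * ((-1) ^ (s - k) * ((d + 1).choose (s - k) : ℤ)))
      = if s = 0 then 1 else 0 := by
  have h := PowerSeries.mk_add_choose_mul_one_sub_pow_eq_one (S := ℤ) (d := d)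
  have h2 := congrArg (PowerSeries.coeff (R := ℤ) s) h
  rw [PowerSeries.coeff_mul, Finset.Nat.sum_antidiagonal_eq_sum_range_succ_mk,
    PowerSeries.coeff_one] at h2
  rw [← h2]
  refine Finset.sum_congr rfl fun k hk => ?_
  rw [PowerSeries.coeff_mk, coeff_one_sub_X_pow]

-- Vandermonde-type identity 2 : (1 - X^2)^{d+1} * (1-X)^{-(d+1)} = (1+X)^{d+1}
lemma V2 (d s : ℕ) :
    (∑ k ∈ Finset.range (d + 2),
        (-1) ^ k * (((d + 1).choose k : ℤ)) *
          (if 2 * k ≤ s then ((d + (s - 2 * k)).choose d : ℤ) else 0))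
      = ((d + 1).choose s : ℤ) := by
  have hG := PowerSeries.mk_add_choose_mul_one_sub_pow_eq_one (S := ℤ) (d := d)
  have key : ((1 : ℤ⟦X⟧) - PowerSeries.X ^ 2) ^ (d + 1)
        * (PowerSeries.mk fun n => ((d + n).choose d : ℤ))
      = ((1 : ℤ⟦X⟧) + PowerSeries.X) ^ (d + 1) := by
    have hfac : ((1 : ℤ⟦X⟧) - PowerSeries.X ^ 2)
        = (1 + PowerSeries.X) * (1 - PowerSeries.X) := by ring
    rw [hfac, mul_pow, mul_assoc, mul_comm ((1 - PowerSeries.X) ^ (d + 1)), hG, mul_one]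
  have h2 := congrArg (PowerSeries.coeff (R := ℤ) s) key
  rw [one_sub_sq_pow, Finset.sum_mul, map_sum] at h2
  have hplus : PowerSeries.coeff (R := ℤ) s (((1 : ℤ⟦X⟧) + PowerSeries.X) ^ (d + 1))
      = ((d + 1).choose s : ℤ) := by
    have h : ((1 : ℤ⟦X⟧) + PowerSeries.X) ^ (d + 1)
        = ∑ k ∈ Finset.range (d + 2),
            PowerSeries.C (R := ℤ) (((d + 1).choose k : ℤ)) * PowerSeries.X ^ k := by
      rw [add_comm, add_pow]
      refine Finset.sum_congr rfl fun k hk => ?_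
      simp only [map_natCast]
      ring
    rw [h, map_sum]
    simp only [PowerSeries.coeff_C_mul, PowerSeries.coeff_X_pow, mul_ite, mul_one, mul_zero]
    rw [Finset.sum_ite_eq (Finset.range (d + 2)) s]
    by_cases hs : s ∈ Finset.range (d + 2)
    · rw [if_pos hs]
    · rw [if_neg hs, Nat.choose_eq_zero_of_lt (by simp at hs; omega)]
      simp
  rw [hplus] at h2
  rw [← h2]
  refine Finset.sum_congr rfl fun k hk => ?_
  symm
  rw [mul_assoc, PowerSeries.coeff_C_mul, PowerSeries.coeff_X_pow_mul']
  split_ifs with h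
  · rw [PowerSeries.coeff_mk, mul_assoc]
  · rfl

lemma V2' (d s : ℕ) :
    (∑ k ∈ Finset.range (s / 2 + 1),
        (-1) ^ k * (((d + 1).choose k : ℤ)) * ((d + (s - 2 * k)).choose d : ℤ))
      = ((d + 1).choose s : ℤ) := by
  have sub1 : Finset.range (s / 2 + 1) ⊆ Finset.range (d + 2 + (s / 2 + 1)) :=
    Finset.range_subset_range.2 (by omega)
  have sub2 : Finset.range (d + 2) ⊆ Finset.range (d + 2 + (s / 2 + 1)) :=
    Finset.range_subset_range.2 (by omega)
  calc (∑ k ∈ Finset.range (s / 2 + 1),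
        (-1) ^ k * (((d + 1).choose k : ℤ)) * ((d + (s - 2 * k)).choose d : ℤ))
      = ∑ k ∈ Finset.range (s / 2 + 1),
        (-1) ^ k * (((d + 1).choose k : ℤ)) *
          (if 2 * k ≤ s then ((d + (s - 2 * k)).choose d : ℤ) else 0) := by
        refine Finset.sum_congr rfl fun k hk => ?_
        have hk' := Finset.mem_range.mp hk
        rw [if_pos (by omega)]
    _ = ∑ k ∈ Finset.range (d + 2 + (s / 2 + 1)),
        (-1) ^ k * (((d + 1).choose k : ℤ)) *
          (if 2 * k ≤ s then ((d + (s - 2 * k)).choose d : ℤ) else 0) := by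
        refine Finset.sum_subset sub1 fun x _ hx => ?_
        have hx' : s / 2 + 1 ≤ x := not_lt.1 (fun h => hx (Finset.mem_range.mpr h))
        rw [if_neg (by omega), mul_zero]
    _ = ∑ k ∈ Finset.range (d + 2),
        (-1) ^ k * (((d + 1).choose k : ℤ)) *
          (if 2 * k ≤ s then ((d + (s - 2 * k)).choose d : ℤ) else 0) := by
        symm
        refine Finset.sum_subset sub2 fun x _ hx => ?_
        have hx' : d + 2 ≤ x := not_lt.1 (fun h => hx (Finset.mem_range.mpr h))
        rw [Nat.choose_eq_zero_of_lt (by omega)]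
        push_cast
        ring
    _ = ((d + 1).choose s : ℤ) := V2 d s


lemma choose_symm_add (d j : ℕ) : (d + j).choose j = (d + j).choose d := by
  have h := Nat.choose_symm (Nat.le_add_right d j)
  have e : d + j - d = j := by omega
  rw [e] at h
  rw [h]

lemma hB (d t n I : ℕ) (ht : t = d + 1) (hn : 0 < n) (hI : I ≤ n) :
    (∑ i ∈ Finset.range n,
        (((I : ℤ) - (i : ℤ)).negOnePow : ℤ) * binom ((t : ℤ) + (i : ℤ) - 1) (i : ℤ) *
          binom (t : ℤ) ((I : ℤ) - (i : ℤ)))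
    = (if I = 0 then 1 else 0) - (if I = n then ((d + n).choose d : ℤ) else 0) := by
  subst ht
  have hterm : ∀ i ∈ Finset.range n,
      (((I : ℤ) - (i : ℤ)).negOnePow : ℤ) * binom (((d + 1 : ℕ) : ℤ) + (i : ℤ) - 1) (i : ℤ) *
          binom ((d + 1 : ℕ) : ℤ) ((I : ℤ) - (i : ℤ))
      = if i ≤ I then ((d + i).choose d : ℤ) *
          ((-1) ^ (I - i) * (((d + 1).choose (I - i) : ℤ))) else 0 := by
    intro i _
    by_cases h : i ≤ I
    · rw [if_pos h]
      have e1 : (I : ℤ) - (i : ℤ) = ((I - i : ℕ) : ℤ) := by omega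
      have e2 : ((d + 1 : ℕ) : ℤ) + (i : ℤ) - 1 = ((d + i : ℕ) : ℤ) := by push_cast; ring
      rw [e1, e2, negOnePow_natCast', binom_natCast, binom_natCast, choose_symm_add]
      ring
    · rw [if_neg h]
      have e1 : (I : ℤ) - (i : ℤ) < 0 := by omega
      rw [binom_of_neg e1, mul_zero]
  rw [Finset.sum_congr rfl hterm, ← Finset.sum_filter]
  by_cases hIn : I = n
  · subst hIn
    have hfil : Finset.filter (fun i => i ≤ I) (Finset.range I) = Finset.range I := by
      ext x; simp; omega
    rw [hfil]
    have hs := Finset.sum_range_succ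
      (fun k => ((d + k).choose d : ℤ) * ((-1) ^ (I - k) * (((d + 1).choose (I - k) : ℤ)))) I
    rw [V1 d I] at hs
    have : (∑ x ∈ Finset.range I,
        ((d + x).choose d : ℤ) * ((-1) ^ (I - x) * (((d + 1).choose (I - x) : ℤ))))
        = (if I = 0 then 1 else 0) - ((d + I).choose d : ℤ) := by
      simp only [Nat.sub_self, pow_zero, Nat.choose_zero_right, Nat.cast_one, mul_one,
        one_mul] at hs
      omega
    rw [this, if_pos rfl]
  · have hfil : Finset.filter (fun i => i ≤ I) (Finset.range n) = Finset.range (I + 1) := by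
      ext x; simp; omega
    rw [hfil, V1 d I, if_neg hIn, sub_zero]

lemma hA (d t n I : ℕ) (ht : t = d + 1) (hn : 0 < n) (hI : (n + 1) / 2 ≤ I) (hI2 : I ≤ n) :
    (∑ i ∈ Finset.Icc ((n + 1) / 2) (n - 1),
        (((I : ℤ) - (i : ℤ)).negOnePow : ℤ) *
          binom ((t : ℤ) + 2 * (i : ℤ) - (n : ℤ) - 1) (2 * (i : ℤ) - (n : ℤ)) *
          binom (t : ℤ) ((I : ℤ) - (i : ℤ)))
    = binom (t : ℤ) (2 * (I : ℤ) - (n : ℤ))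
        - (if I = n then ((d + n).choose d : ℤ) else 0) := by
  subst ht
  have hrhs : binom ((d + 1 : ℕ) : ℤ) (2 * (I : ℤ) - (n : ℤ)) = (((d + 1).choose (2 * I - n)) : ℤ) := by
    have e : 2 * (I : ℤ) - (n : ℤ) = ((2 * I - n : ℕ) : ℤ) := by omega
    rw [e, binom_natCast]
  have hterm : ∀ i ∈ Finset.Icc ((n + 1) / 2) (n - 1),
      (((I : ℤ) - (i : ℤ)).negOnePow : ℤ) *
          binom (((d + 1 : ℕ) : ℤ) + 2 * (i : ℤ) - (n : ℤ) - 1) (2 * (i : ℤ) - (n : ℤ)) *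
          binom ((d + 1 : ℕ) : ℤ) ((I : ℤ) - (i : ℤ))
      = if i ≤ I then ((-1) ^ (I - i) * (((d + (2 * i - n)).choose d : ℤ)) *
          (((d + 1).choose (I - i) : ℤ))) else 0 := by
    intro i hi
    have hi' := Finset.mem_Icc.mp hi
    have h2i : n ≤ 2 * i := by omega
    by_cases h : i ≤ I
    · rw [if_pos h]
      have e1 : (I : ℤ) - (i : ℤ) = ((I - i : ℕ) : ℤ) := by omega
      have e2 : ((d + 1 : ℕ) : ℤ) + 2 * (i : ℤ) - (n : ℤ) - 1 = ((d + (2 * i - n) : ℕ) : ℤ) := by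
        omega
      have e3 : 2 * (i : ℤ) - (n : ℤ) = ((2 * i - n : ℕ) : ℤ) := by omega
      rw [e1, e2, e3, negOnePow_natCast', binom_natCast, binom_natCast, choose_symm_add]
    · rw [if_neg h]
      have e1 : (I : ℤ) - (i : ℤ) < 0 := by omega
      rw [binom_of_neg e1, mul_zero]
  rw [Finset.sum_congr rfl hterm, ← Finset.sum_filter]
  by_cases hIn : I = n
  · subst hIn
    have hfil : Finset.filter (fun i => i ≤ I) (Finset.Icc ((I + 1) / 2) (I - 1))
        = Finset.Icc ((I + 1) / 2) (I - 1) := by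
      ext x; simp; omega
    rw [hfil, if_pos rfl]
    have hv := V2' d I
    have hins : Finset.range (I / 2 + 1) = insert 0 (Finset.Icc 1 (I / 2)) := by
      ext x; simp; omega
    rw [hins, Finset.sum_insert (by simp)] at hv
    simp only [pow_zero, Nat.choose_zero_right, Nat.cast_one, mul_one, one_mul,
      Nat.mul_zero, Nat.sub_zero] at hv
    have hbij : (∑ i ∈ Finset.Icc ((I + 1) / 2) (I - 1),
        ((-1) ^ (I - i) * (((d + (2 * i - I)).choose d : ℤ)) * (((d + 1).choose (I - i) : ℤ))))
        = ∑ k ∈ Finset.Icc 1 (I / 2),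
        (-1) ^ k * (((d + 1).choose k : ℤ)) * ((d + (I - 2 * k)).choose d : ℤ) := by
      refine Finset.sum_nbij' (fun i => I - i) (fun k => I - k) ?_ ?_ ?_ ?_ ?_
      · intro a ha
        have := Finset.mem_Icc.mp ha
        simp only [Finset.mem_Icc]
        omega
      · intro a ha
        have := Finset.mem_Icc.mp ha
        simp only [Finset.mem_Icc]
        omega
      · intro a ha
        have := Finset.mem_Icc.mp ha
        omega
      · intro a ha
        have := Finset.mem_Icc.mp ha
        omega
      · intro a ha
        have ha' := Finset.mem_Icc.mp ha
        have e : I - 2 * (I - a) = 2 * a - I := by omega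
        rw [e]
        ring
    rw [hbij, hrhs]
    have e : 2 * I - I = I := by omega
    rw [e]
    linarith [hv]
  · have hfil : Finset.filter (fun i => i ≤ I) (Finset.Icc ((n + 1) / 2) (n - 1))
        = Finset.Icc ((n + 1) / 2) I := by
      ext x; simp; omega
    rw [hfil, if_neg hIn, sub_zero, hrhs]
    have hv := V2' d (2 * I - n)
    have hrange : (2 * I - n) / 2 + 1 = I - (n + 1) / 2 + 1 := by omega
    rw [← hv]
    refine Finset.sum_nbij' (fun i => I - i) (fun k => I - k) ?_ ?_ ?_ ?_ ?_
    · intro a ha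
      have := Finset.mem_Icc.mp ha
      simp only [Finset.mem_range]
      omega
    · intro a ha
      have := Finset.mem_range.mp ha
      simp only [Finset.mem_Icc]
      omega
    · intro a ha
      have := Finset.mem_Icc.mp ha
      omega
    · intro a ha
      have := Finset.mem_range.mp ha
      omega
    · intro a ha
      have ha' := Finset.mem_Icc.mp ha
      have e : (2 * I - n) - 2 * (I - a) = 2 * a - n := by omega
      rw [e]
      ring

end Helpers

theorem poly_identity_ShowMe1 (n t : ℕ) (hn : 0 < n) (ht : 0 < t) :
    (1 : ℤ[X]) -
      ∑ I ∈ Finset.Icc ((n + 1) / 2) n,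
        Polynomial.C (binom (t : ℤ) (2 * (I : ℤ) - (n : ℤ))) * X ^ I =
    -(∑ I ∈ Finset.Icc ((n + 1) / 2) n,
        Polynomial.C (∑ i ∈ Finset.Icc ((n + 1) / 2) (n - 1),
          (((I : ℤ) - (i : ℤ)).negOnePow : ℤ) *
            binom ((t : ℤ) + 2 * (i : ℤ) - (n : ℤ) - 1) (2 * (i : ℤ) - (n : ℤ)) *
            binom (t : ℤ) ((I : ℤ) - (i : ℤ))) * X ^ I)
    + ∑ I ∈ Finset.range (n + 1),
        Polynomial.C (∑ i ∈ Finset.range n,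
          (((I : ℤ) - (i : ℤ)).negOnePow : ℤ) * binom ((t : ℤ) + (i : ℤ) - 1) (i : ℤ) *
            binom (t : ℤ) ((I : ℤ) - (i : ℤ))) * X ^ I := by
  obtain ⟨d, rfl⟩ : ∃ d, t = d + 1 := ⟨t - 1, by omega⟩
  have hSB : (∑ I ∈ Finset.range (n + 1),
        Polynomial.C (∑ i ∈ Finset.range n,
          (((I : ℤ) - (i : ℤ)).negOnePow : ℤ) * binom (((d + 1 : ℕ) : ℤ) + (i : ℤ) - 1) (i : ℤ) *
            binom ((d + 1 : ℕ) : ℤ) ((I : ℤ) - (i : ℤ))) * X ^ I)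
      = 1 - Polynomial.C (((d + n).choose d : ℤ)) * X ^ n := by
    have step1 : ∀ I ∈ Finset.range (n + 1),
        Polynomial.C (∑ i ∈ Finset.range n,
          (((I : ℤ) - (i : ℤ)).negOnePow : ℤ) * binom (((d + 1 : ℕ) : ℤ) + (i : ℤ) - 1) (i : ℤ) *
            binom ((d + 1 : ℕ) : ℤ) ((I : ℤ) - (i : ℤ))) * X ^ I
        = Polynomial.C (if I = 0 then (1 : ℤ) else 0) * X ^ I
            - Polynomial.C (if I = n then ((d + n).choose d : ℤ) else 0) * X ^ I := by
      intro I hI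
      rw [hB d (d + 1) n I rfl hn (Nat.lt_succ_iff.mp (Finset.mem_range.mp hI)), map_sub,
        sub_mul]
    rw [Finset.sum_congr rfl step1, Finset.sum_sub_distrib]
    have e1 : (∑ I ∈ Finset.range (n + 1), Polynomial.C (if I = 0 then (1 : ℤ) else 0) * X ^ I)
        = 1 := by
      rw [Finset.sum_eq_single_of_mem 0 (Finset.mem_range.mpr (by omega))]
      · simp
      · intro b _ hb
        rw [if_neg hb, map_zero, zero_mul]
    have e2 : (∑ I ∈ Finset.range (n + 1),
          Polynomial.C (if I = n then ((d + n).choose d : ℤ) else 0) * X ^ I)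
        = Polynomial.C (((d + n).choose d : ℤ)) * X ^ n := by
      rw [Finset.sum_eq_single_of_mem n (Finset.mem_range.mpr (by omega))]
      · rw [if_pos rfl]
      · intro b _ hb
        rw [if_neg hb, map_zero, zero_mul]
    rw [e1, e2]
  have hSA : (∑ I ∈ Finset.Icc ((n + 1) / 2) n,
        Polynomial.C (∑ i ∈ Finset.Icc ((n + 1) / 2) (n - 1),
          (((I : ℤ) - (i : ℤ)).negOnePow : ℤ) *
            binom (((d + 1 : ℕ) : ℤ) + 2 * (i : ℤ) - (n : ℤ) - 1) (2 * (i : ℤ) - (n : ℤ)) *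
            binom ((d + 1 : ℕ) : ℤ) ((I : ℤ) - (i : ℤ))) * X ^ I)
      = (∑ I ∈ Finset.Icc ((n + 1) / 2) n,
          Polynomial.C (binom (((d + 1 : ℕ) : ℤ)) (2 * (I : ℤ) - (n : ℤ))) * X ^ I)
        - Polynomial.C (((d + n).choose d : ℤ)) * X ^ n := by
    have step1 : ∀ I ∈ Finset.Icc ((n + 1) / 2) n,
        Polynomial.C (∑ i ∈ Finset.Icc ((n + 1) / 2) (n - 1),
          (((I : ℤ) - (i : ℤ)).negOnePow : ℤ) *
            binom (((d + 1 : ℕ) : ℤ) + 2 * (i : ℤ) - (n : ℤ) - 1) (2 * (i : ℤ) - (n : ℤ)) *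
            binom ((d + 1 : ℕ) : ℤ) ((I : ℤ) - (i : ℤ))) * X ^ I
        = Polynomial.C (binom (((d + 1 : ℕ) : ℤ)) (2 * (I : ℤ) - (n : ℤ))) * X ^ I
            - Polynomial.C (if I = n then ((d + n).choose d : ℤ) else 0) * X ^ I := by
      intro I hI
      have hI' := Finset.mem_Icc.mp hI
      rw [hA d (d + 1) n I rfl hn hI'.1 hI'.2, map_sub, sub_mul]
    rw [Finset.sum_congr rfl step1, Finset.sum_sub_distrib]
    have e2 : (∑ I ∈ Finset.Icc ((n + 1) / 2) n,
          Polynomial.C (if I = n then ((d + n).choose d : ℤ) else 0) * X ^ I)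
        = Polynomial.C (((d + n).choose d : ℤ)) * X ^ n := by
      rw [Finset.sum_eq_single_of_mem n (Finset.mem_Icc.mpr (by omega))]
      · rw [if_pos rfl]
      · intro b _ hb
        rw [if_neg hb, map_zero, zero_mul]
    rw [e2]
  rw [hSA, hSB]
  ring
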